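/- arXiv:1308.3629 — 2 statements merged into one kernel-verified Lean document; each statement's English description precedes it below -/
import Mathlib

section
/- Let X be a Banach space with separable dual and let 1 < p < ∞. Then Dz(X) ≤ Sz(L_p(X)). -/
open Metric Set Filter TopologicalSpace
open scoped ENNReal

noncomputable section

/-- A set `U` in the dual of `X` is weak\*-open if every point of `U` has a basic weak\*
neighborhood (determined by finitely many points of `X`) contained in `U`. -/
def IsWeakStarOpen {X : Type*} [NormedAddCommGroup X] [NormedSpace ℝ X]
    (U : Set (X →L[ℝ] ℝ)) : Prop :=
  ∀ f ∈ U, ∃ (n : ℕ) (x : Fin n → X) (δ : ℝ), 0 < δ ∧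
    ∀ g : X →L[ℝ] ℝ, (∀ i, |g (x i) - f (x i)| < δ) → g ∈ U

/-- The Szlenk derivation: remove all points of `K` lying in a relatively weak\*-open
subset of `K` of norm diameter less than `ε`. -/
def szlenkDeriv {X : Type*} [NormedAddCommGroup X] [NormedSpace ℝ X]
    (ε : ℝ) (K : Set (X →L[ℝ] ℝ)) : Set (X →L[ℝ] ℝ) :=
  {f | f ∈ K ∧ ¬ ∃ U : Set (X →L[ℝ] ℝ), IsWeakStarOpen U ∧ f ∈ U ∧
    EMetric.diam (K ∩ U) < ENNReal.ofReal ε}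

/-- The dentability derivation: remove all points of `K` lying in a weak\*-slice of `K`
of norm diameter less than `ε`. -/
def dentDeriv {X : Type*} [NormedAddCommGroup X] [NormedSpace ℝ X]
    (ε : ℝ) (K : Set (X →L[ℝ] ℝ)) : Set (X →L[ℝ] ℝ) :=
  {f | f ∈ K ∧ ¬ ∃ (x : X) (t : ℝ), t < f x ∧
    EMetric.diam {g | g ∈ K ∧ t < g x} < ENNReal.ofReal ε}

/-- Transfinite iteration of a set derivation, with intersections at limit stages. -/
def derivIter {α : Type*} (D : Set α → Set α) (K : Set α) (o : Ordinal.{0}) : Set α :=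
  Ordinal.limitRecOn o K (fun _ ih => D ih) (fun o _ ih => ⋂ (β : {β : Ordinal.{0} // β < o}), ih β.1 β.2)

open scoped Classical in
/-- The ordinal index associated with a derivation: the least ordinal at which the iterated
derived set of `K` is empty, or `⊤` (i.e. `∞`) if the derived sets are never empty. -/
def derivIndex {α : Type*} (D : Set α → Set α) (K : Set α) : WithTop Ordinal.{0} :=
  if ∃ o : Ordinal.{0}, derivIter D K o = ∅
    then ((sInf {o : Ordinal.{0} | derivIter D K o = ∅} : Ordinal.{0}) : WithTop Ordinal.{0})
    else ⊤

/-- The `ε`-Szlenk index `Sz(X,ε)`. -/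
def SzEps (X : Type*) [NormedAddCommGroup X] [NormedSpace ℝ X] (ε : ℝ) : WithTop Ordinal.{0} :=
  derivIndex (szlenkDeriv (X := X) ε) (closedBall (0 : X →L[ℝ] ℝ) 1)

/-- The Szlenk index `Sz(X) = sup_{ε > 0} Sz(X,ε)`. -/
def Sz (X : Type*) [NormedAddCommGroup X] [NormedSpace ℝ X] : WithTop Ordinal.{0} :=
  ⨆ ε : {ε : ℝ // 0 < ε}, SzEps X ε.1

/-- The `ε`-weak\*-dentability index `Dz(X,ε)`. -/
def DzEps (X : Type*) [NormedAddCommGroup X] [NormedSpace ℝ X] (ε : ℝ) : WithTop Ordinal.{0} :=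
  derivIndex (dentDeriv (X := X) ε) (closedBall (0 : X →L[ℝ] ℝ) 1)

/-- The weak\*-dentability index `Dz(X) = sup_{ε > 0} Dz(X,ε)`. -/
def Dz (X : Type*) [NormedAddCommGroup X] [NormedSpace ℝ X] : WithTop Ordinal.{0} :=
  ⨆ ε : {ε : ℝ // 0 < ε}, DzEps X ε.1

/-- `L_p(X)`: the space of `X`-valued Bochner `p`-integrable functions on `[0,1]`. -/
abbrev LpOn (X : Type*) [NormedAddCommGroup X] (p : ℝ≥0∞) :=
  MeasureTheory.Lp (α := ℝ) X p ((MeasureTheory.volume : MeasureTheory.Measure ℝ).restrict (Icc 0 1))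

/-- A normalized weakly null sequence. -/
def IsNormalizedWeaklyNull {X : Type*} [NormedAddCommGroup X] [NormedSpace ℝ X] (y : ℕ → X) : Prop :=
  (∀ n, ‖y n‖ = 1) ∧ ∀ f : X →L[ℝ] ℝ, Tendsto (fun n => f (y n)) atTop (nhds 0)

/-- A tree on the unit sphere of `X`: a nonempty set of finite sequences of norm one vectors,
closed under taking initial segments. -/
def IsTreeOnSphere {X : Type*} [NormedAddCommGroup X] (A : Set (List X)) : Prop :=
  A.Nonempty ∧ (∀ l ∈ A, ∀ x ∈ l, ‖x‖ = 1) ∧ ∀ l ∈ A, ∀ l' : List X, l' <+: l → l' ∈ A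

/-- A hereditary tree (H-tree) on the unit sphere of `X`: a tree containing all
subsequences of each of its members. -/
def IsHTree {X : Type*} [NormedAddCommGroup X] (A : Set (List X)) : Prop :=
  IsTreeOnSphere A ∧ ∀ l ∈ A, ∀ l' : List X, List.Sublist l' l → l' ∈ A

/-- The weak derivative of a tree: all members which admit extensions inside the tree along a
normalized weakly null sequence, together with all initial segments of such members. -/
def weakDeriv {X : Type*} [NormedAddCommGroup X] [NormedSpace ℝ X] (A : Set (List X)) :
    Set (List X) :=
  {l | ∃ m ∈ A, l <+: m ∧ ∃ y : ℕ → X, IsNormalizedWeaklyNull y ∧ ∀ n, m ++ [y n] ∈ A}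

/-- The weak index `I_w` of a tree on the unit sphere. -/
def Iw {X : Type*} [NormedAddCommGroup X] [NormedSpace ℝ X] (A : Set (List X)) :
    WithTop Ordinal.{0} :=
  derivIndex weakDeriv A

/-- The tree `F_ρ^X` of finite normalized sequences which `ρ`-dominate the positive part of
the `ℓ_1` norm. -/
def FTree (X : Type*) [NormedAddCommGroup X] [NormedSpace ℝ X] (ρ : ℝ) : Set (List X) :=
  {l | (∀ x ∈ l, ‖x‖ = 1) ∧ ∀ a : ℕ → ℝ, (∀ i, 0 ≤ a i) →
    ρ * (∑ i ∈ Finset.range l.length, a i) ≤ ‖∑ i ∈ Finset.range l.length, a i • l.getD i 0‖}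

/-- A finite sequence is `c`-basic if partial sums of linear combinations are dominated,
with constant `c`, by the full linear combination. -/
def IsCBasicSeq {X : Type*} [NormedAddCommGroup X] [NormedSpace ℝ X] (c : ℝ) (l : List X) : Prop :=
  ∀ a : ℕ → ℝ, ∀ m ≤ l.length,
    ‖∑ i ∈ Finset.range m, a i • l.getD i 0‖ ≤
      c * ‖∑ i ∈ Finset.range l.length, a i • l.getD i 0‖

/-- An order isomorphism between trees: injective on `A`, mapping `A` into `B`, and preserving
and reflecting the strict initial-segment order. -/
def IsTreeOrderIso {X Y : Type*} (A : Set (List X)) (B : Set (List Y))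
    (Ψ : List X → List Y) : Prop :=
  (∀ l ∈ A, Ψ l ∈ B) ∧ Set.InjOn Ψ A ∧
    ∀ l ∈ A, ∀ m ∈ A, ((Ψ l <+: Ψ m ∧ Ψ l ≠ Ψ m) ↔ (l <+: m ∧ l ≠ m))

/-- Condition (2.1.1): `Ψ` maps weakly null extensions in `A` to weakly null extensions. -/
def MapsWeaklyNullExtensions {X Y : Type*} [NormedAddCommGroup X] [NormedSpace ℝ X]
    [NormedAddCommGroup Y] [NormedSpace ℝ Y] (A : Set (List X)) (Ψ : List X → List Y) : Prop :=
  ∀ l ∈ A, ∀ x : ℕ → X, IsNormalizedWeaklyNull x → (∀ k, l ++ [x k] ∈ A) →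
    ∃ y : ℕ → Y, IsNormalizedWeaklyNull y ∧ ∀ k, Ψ (l ++ [x k]) = Ψ l ++ [y k]

/-- `C([0,β])`: the space of continuous functions on the ordinal interval `[0,β]`. -/
abbrev COrd (β : Ordinal.{0}) := BoundedContinuousFunction (Iic β) ℝ

/-! ### Auxiliary development for the proof -/

namespace DSz

open MeasureTheory

/-! #### Generic lemmas on the transfinite iteration -/

theorem derivIter_zero {α : Type*} (D : Set α → Set α) (K : Set α) :
    derivIter D K 0 = K :=
  Ordinal.limitRecOn_zero ..

theorem derivIter_succ {α : Type*} (D : Set α → Set α) (K : Set α) (o : Ordinal.{0}) :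
    derivIter D K (Order.succ o) = D (derivIter D K o) :=
  Ordinal.limitRecOn_succ ..

theorem derivIter_limit {α : Type*} (D : Set α → Set α) (K : Set α) (o : Ordinal.{0})
    (ho : Order.IsSuccLimit o) :
    derivIter D K o = ⋂ (β : {β : Ordinal.{0} // β < o}), derivIter D K β.1 :=
  Ordinal.limitRecOn_limit _ _ _ _ ho

theorem derivIter_subset {α : Type*} {D : Set α → Set α} (hD : ∀ S, D S ⊆ S) (K : Set α)
    (o : Ordinal.{0}) : derivIter D K o ⊆ K := by
  induction o using Ordinal.limitRecOn with
  | zero => rw [derivIter_zero]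
  | add_one o IH => rw [Ordinal.add_one_eq_succ, derivIter_succ]; exact (hD _).trans IH
  | limit o ho IH =>
      rw [derivIter_limit _ _ _ ho]
      exact (Set.iInter_subset _ ⟨0, ho.pos⟩).trans (IH 0 ho.pos)

theorem derivIndex_le {α β : Type*} (D : Set α → Set α) (K : Set α)
    (D' : Set β → Set β) (K' : Set β)
    (himp : ∀ o : Ordinal.{0}, derivIter D' K' o = ∅ → derivIter D K o = ∅) :
    derivIndex D K ≤ derivIndex D' K' := by
  classical
  by_cases h' : ∃ o : Ordinal.{0}, derivIter D' K' o = ∅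
  · have hmem : sInf {o : Ordinal.{0} | derivIter D' K' o = ∅} ∈
        {o : Ordinal.{0} | derivIter D' K' o = ∅} := csInf_mem h'
    have hmem2 : sInf {o : Ordinal.{0} | derivIter D' K' o = ∅} ∈
        {o : Ordinal.{0} | derivIter D K o = ∅} := himp _ hmem
    have h : ∃ o : Ordinal.{0}, derivIter D K o = ∅ := ⟨_, hmem2⟩
    rw [derivIndex, derivIndex, if_pos h, if_pos h']
    exact WithTop.coe_le_coe.2 (csInf_le (OrderBot.bddBelow _) hmem2)
  · rw [derivIndex, derivIndex, if_neg h']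
    exact le_top

theorem dentDeriv_subset {X : Type*} [NormedAddCommGroup X] [NormedSpace ℝ X] (ε : ℝ)
    (S : Set (X →L[ℝ] ℝ)) : dentDeriv ε S ⊆ S := fun _ hg => hg.1

end DSz


namespace DSz

open MeasureTheory

/-- The reference measure: Lebesgue measure restricted to `[0,1]`. -/
abbrev mu0 : Measure ℝ := (volume : Measure ℝ).restrict (Icc 0 1)

instance : IsFiniteMeasure mu0 :=
  ⟨by simp [Measure.restrict_apply_univ, Real.volume_Icc]⟩

theorem mu0_univ : mu0 Set.univ = 1 := by
  simp [Measure.restrict_apply_univ, Real.volume_Icc]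

set_option linter.unusedSectionVars false

variable (X : Type) [NormedAddCommGroup X] [NormedSpace ℝ X] [CompleteSpace X]
  (p : ℝ≥0∞) [Fact (1 ≤ p)]

theorem integrableY (f : LpOn X p) : Integrable f mu0 :=
  (Lp.memLp f).integrable Fact.out

theorem integral_norm_le_normY (f : LpOn X p) : ∫ t, ‖f t‖ ∂mu0 ≤ ‖f‖ := by
  rw [integral_norm_eq_lintegral_enorm (Lp.aestronglyMeasurable f), Lp.norm_def]
  refine ENNReal.toReal_mono (Lp.eLpNorm_ne_top f) ?_
  rw [← eLpNorm_one_eq_lintegral_enorm]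
  have h := eLpNorm_le_eLpNorm_mul_rpow_measure_univ (p := 1) (q := p) Fact.out
    (Lp.aestronglyMeasurable f)
  simpa [mu0_univ] using h

/-- The continuous linear map `f ↦ ∫_A f` from `L_p(X)` to `X`. -/
noncomputable def TInt (A : Set ℝ) : LpOn X p →L[ℝ] X :=
  LinearMap.mkContinuous
    { toFun := fun f => ∫ t in A, f t ∂mu0
      map_add' := by
        intro f g
        show ∫ t in A, (f + g) t ∂mu0 = (∫ t in A, f t ∂mu0) + ∫ t in A, g t ∂mu0
        rw [integral_congr_ae (ae_restrict_of_ae (Lp.coeFn_add f g))]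
        exact integral_add ((integrableY X p f).integrableOn)
          ((integrableY X p g).integrableOn)
      map_smul' := by
        intro c f
        show ∫ t in A, (c • f) t ∂mu0 = c • ∫ t in A, f t ∂mu0
        rw [integral_congr_ae (ae_restrict_of_ae (Lp.coeFn_smul c f))]
        simpa using integral_smul c (fun t => f t) } 1
    (by
      intro f
      simp only [LinearMap.coe_mk, AddHom.coe_mk, one_mul]
      calc ‖∫ t in A, f t ∂mu0‖ ≤ ∫ t in A, ‖f t‖ ∂mu0 := norm_integral_le_integral_norm _
        _ ≤ ∫ t, ‖f t‖ ∂mu0 :=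
            setIntegral_le_integral (integrableY X p f).norm
              (Filter.Eventually.of_forall fun t => norm_nonneg _)
        _ ≤ ‖f‖ := integral_norm_le_normY X p f)

theorem TInt_apply (A : Set ℝ) (f : LpOn X p) : TInt X p A f = ∫ t in A, f t ∂mu0 := rfl

theorem norm_TInt_le (A : Set ℝ) (f : LpOn X p) : ‖TInt X p A f‖ ≤ ∫ t in A, ‖f t‖ ∂mu0 :=
  norm_integral_le_integral_norm _

/-- Mixtures of functionals from `S` along a finite measurable partition of `[0,1]`. -/
def Mixes (S : Set (X →L[ℝ] ℝ)) : Set (LpOn X p →L[ℝ] ℝ) :=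
  {h | ∃ (κ : Type) (t : Finset κ) (A : κ → Set ℝ) (g : κ → (X →L[ℝ] ℝ)),
    (∀ k ∈ t, MeasurableSet (A k)) ∧
    (∀ k ∈ t, ∀ l ∈ t, k ≠ l → Disjoint (A k) (A l)) ∧
    (⋃ k ∈ t, A k) = Set.univ ∧ (∀ k ∈ t, g k ∈ S) ∧
    h = ∑ k ∈ t, (g k).comp (TInt X p (A k))}

theorem Mixes_mono {S S' : Set (X →L[ℝ] ℝ)} (hSS : S ⊆ S') :
    Mixes X p S ⊆ Mixes X p S' := by
  rintro h ⟨κ, t, A, g, h1, h2, h3, h4, h5⟩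
  exact ⟨κ, t, A, g, h1, h2, h3, fun k hk => hSS (h4 k hk), h5⟩

theorem mixes_single {S : Set (X →L[ℝ] ℝ)} {g : X →L[ℝ] ℝ} (hg : g ∈ S) :
    g.comp (TInt X p Set.univ) ∈ Mixes X p S := by
  refine ⟨PUnit, {PUnit.unit}, fun _ => Set.univ, fun _ => g, ?_, ?_, ?_, ?_, ?_⟩
  · exact fun _ _ => MeasurableSet.univ
  · intro k _ l _ hkl; exact absurd (Subsingleton.elim k l) hkl
  · simp [Set.iUnion_const]
  · exact fun _ _ => hg
  · simp

theorem Mixes_norm_le {S : Set (X →L[ℝ] ℝ)} (hS : S ⊆ closedBall 0 1)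
    {h : LpOn X p →L[ℝ] ℝ} (hh : h ∈ Mixes X p S) : ‖h‖ ≤ 1 := by
  obtain ⟨κ, t, A, g, hAm, hAd, hAu, hgS, rfl⟩ := hh
  refine ContinuousLinearMap.opNorm_le_bound _ zero_le_one fun f => ?_
  rw [one_mul]
  calc ‖(∑ k ∈ t, (g k).comp (TInt X p (A k))) f‖
      = ‖∑ k ∈ t, (g k) (TInt X p (A k) f)‖ := by
        simp [ContinuousLinearMap.sum_apply]
    _ ≤ ∑ k ∈ t, ‖(g k) (TInt X p (A k) f)‖ := norm_sum_le _ _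
    _ ≤ ∑ k ∈ t, ∫ s in A k, ‖f s‖ ∂mu0 := by
        refine Finset.sum_le_sum fun k hk => ?_
        calc ‖(g k) (TInt X p (A k) f)‖ ≤ ‖g k‖ * ‖TInt X p (A k) f‖ :=
              (g k).le_opNorm _
          _ ≤ 1 * ‖TInt X p (A k) f‖ := by
              have : ‖g k‖ ≤ 1 := mem_closedBall_zero_iff.1 (hS (hgS k hk))
              exact mul_le_mul_of_nonneg_right this (norm_nonneg _)
          _ = ‖TInt X p (A k) f‖ := one_mul _
          _ ≤ ∫ s in A k, ‖f s‖ ∂mu0 := norm_TInt_le X p (A k) f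
    _ = ∫ s in ⋃ k ∈ t, A k, ‖f s‖ ∂mu0 :=
        (integral_biUnion_finset t hAm
          (fun a ha b hb hab => hAd a ha b hb hab)
          (fun k _ => (integrableY X p f).norm.integrableOn)).symm
    _ = ∫ s, ‖f s‖ ∂mu0 := by rw [hAu, Measure.restrict_univ]
    _ ≤ ‖f‖ := integral_norm_le_normY X p f

end DSz


namespace DSz

variable {X : Type} [NormedAddCommGroup X] [NormedSpace ℝ X]

theorem exists_norming (d : X →L[ℝ] ℝ) {c η : ℝ} (hc : c ≤ ‖d‖) (hη : 0 < η) :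
    ∃ x : X, ‖x‖ ≤ 1 ∧ c - η < d x := by
  rcases lt_or_ge (c - η) 0 with hneg | hpos
  · exact ⟨0, by simp, by simpa using hneg⟩
  · by_contra hcon
    push_neg at hcon
    have habs : ∀ x : X, ‖x‖ ≤ 1 → |d x| ≤ c - η := by
      intro x hx
      refine abs_le.2 ⟨?_, hcon x hx⟩
      have h2 := hcon (-x) (by simpa using hx)
      rw [map_neg] at h2
      linarith
    have hnorm : ‖d‖ ≤ c - η := by
      refine ContinuousLinearMap.opNorm_le_bound _ hpos fun x => ?_
      rcases eq_or_ne x 0 with rfl | hx0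
      · simp [mul_nonneg hpos (norm_nonneg (0 : X))]
      · have hxpos : (0:ℝ) < ‖x‖ := norm_pos_iff.2 hx0
        have := habs (‖x‖⁻¹ • x) (by
          rw [norm_smul, norm_inv, norm_norm, inv_mul_cancel₀ hxpos.ne']
          )
        rw [map_smul, smul_eq_mul, abs_mul, abs_inv, abs_norm] at this
        rw [Real.norm_eq_abs]
        calc |d x| = ‖x‖ * (‖x‖⁻¹ * |d x|) := by
              field_simp
          _ ≤ ‖x‖ * (c - η) := mul_le_mul_of_nonneg_left this (norm_nonneg x)
          _ = (c - η) * ‖x‖ := mul_comm _ _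
    linarith

/-- If `g₀` survives the `ε`-dentability derivation of `S`, then near `g₀` (in the weak\*
sense determined by finitely many vectors) one finds convex combinations of elements of `S`
that are `ε/3`-far from `g₀`. -/
theorem exists_near_comb {S : Set (X →L[ℝ] ℝ)} {ε : ℝ} (hε : 0 < ε)
    {g₀ : X →L[ℝ] ℝ} (hg : g₀ ∈ dentDeriv ε S) {n : ℕ} (m : Fin n → X)
    {δ' : ℝ} (hδ' : 0 < δ') :
    ∃ (M : ℕ) (lam : ℕ → ℝ) (G : ℕ → (X →L[ℝ] ℝ)),
      (∀ k < M, 0 ≤ lam k) ∧ (∑ k ∈ Finset.range M, lam k) = 1 ∧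
      (∀ k < M, G k ∈ S ∧ ε/3 ≤ ‖G k - g₀‖) ∧
      (∀ i, |(∑ k ∈ Finset.range M, lam k * G k (m i)) - g₀ (m i)| < δ') := by
  classical
  obtain ⟨hg₀S, hno⟩ := hg
  set F : Set (X →L[ℝ] ℝ) := {u | u ∈ S ∧ ε/3 ≤ ‖u - g₀‖} with hF
  have hFsub : ∀ u ∈ S, u ∉ F → ‖u - g₀‖ < ε/3 := fun u hu hn =>
    lt_of_not_ge fun hle => hn ⟨hu, hle⟩
  by_contra hcon
  push_neg at hcon
  -- we will produce a small slice of `S` containing `g₀`, contradicting `hno`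
  apply hno
  suffices hclaim : ∃ (x : X) (tt : ℝ), tt < g₀ x ∧
      ∀ u, u ∈ S → tt < u x → ‖u - g₀‖ < ε/3 by
    obtain ⟨x, tt, htt, hsmall⟩ := hclaim
    refine ⟨x, tt, htt, ?_⟩
    refine lt_of_le_of_lt (EMetric.diam_le ?_)
      ((ENNReal.ofReal_lt_ofReal_iff hε).2 (by linarith : 2*ε/3 < ε))
    rintro u ⟨hu1, hu2⟩ v ⟨hv1, hv2⟩
    rw [edist_dist, dist_eq_norm]
    refine ENNReal.ofReal_le_ofReal ?_
    have h1 := hsmall u hu1 hu2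
    have h2 := hsmall v hv1 hv2
    calc ‖u - v‖ = ‖(u - g₀) - (v - g₀)‖ := by abel_nf
      _ ≤ ‖u - g₀‖ + ‖v - g₀‖ := norm_sub_le _ _
      _ ≤ 2*ε/3 := by linarith
  -- main case distinction on whether `F` is empty
  rcases Set.eq_empty_or_nonempty F with hFe | hFne
  · refine ⟨0, -1, by simp, fun u hu _ => hFsub u hu (by simp [hFe])⟩
  · -- separation in `Fin n → ℝ`
    set π : (X →L[ℝ] ℝ) →ₗ[ℝ] (Fin n → ℝ) :=
      { toFun := fun u => fun i => u (m i)
        map_add' := by intro u v; funext i; simp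
        map_smul' := by intro c u; funext i; simp } with hπ
    have hπapp : ∀ u : X →L[ℝ] ℝ, ∀ i, π u i = u (m i) := fun u i => rfl
    set Cl : Set (Fin n → ℝ) := closure (π '' (convexHull ℝ F)) with hCl
    have hCconv : Convex ℝ Cl := ((convex_convexHull ℝ F).linear_image π).closure
    have hnotmem : π g₀ ∉ Cl := by
      intro hmem
      rw [Metric.mem_closure_iff] at hmem
      obtain ⟨y, ⟨c, hcF, rfl⟩, hdist⟩ := hmem δ' hδ'
      rw [convexHull_eq] at hcF
      obtain ⟨ι, tt, w, z, hw0, hw1, hzF, hcz⟩ := hcF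
      -- turn the `Finset` combination into a `Fin`-indexed one
      set e := tt.equivFin with he
      set M := tt.card with hM
      set lam : ℕ → ℝ := fun k => if hk : k < M then w (e.symm ⟨k, hk⟩).1 else 0 with hlam
      set G : ℕ → (X →L[ℝ] ℝ) := fun k => if hk : k < M then z (e.symm ⟨k, hk⟩).1 else 0
        with hG
      have hsum : ∀ (φ : (X →L[ℝ] ℝ) → ℝ),
          (∑ k ∈ Finset.range M, lam k * φ (G k)) = ∑ j ∈ tt, w j * φ (z j) := by
        intro φ
        have h1 : ∀ k : Fin M, lam ↑k * φ (G ↑k) = w (e.symm k).1 * φ (z (e.symm k).1) := by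
          intro k; simp only [hlam, hG, dif_pos k.2, Fin.eta]
        calc (∑ k ∈ Finset.range M, lam k * φ (G k))
            = ∑ k : Fin M, lam ↑k * φ (G ↑k) :=
              (Fin.sum_univ_eq_sum_range (fun k => lam k * φ (G k)) M).symm
          _ = ∑ k : Fin M, w (e.symm k).1 * φ (z (e.symm k).1) :=
              Finset.sum_congr rfl fun k _ => h1 k
          _ = ∑ j : {x // x ∈ tt}, w j.1 * φ (z j.1) := Equiv.sum_comp e.symm (fun j => w j.1 * φ (z j.1))
          _ = ∑ j ∈ tt, w j * φ (z j) := Finset.sum_coe_sort tt (fun j => w j * φ (z j))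
      have h1 : ∀ k < M, 0 ≤ lam k := by
        intro k hk; simp only [hlam, dif_pos hk]; exact hw0 _ (e.symm ⟨k, hk⟩).2
      have h2 : (∑ k ∈ Finset.range M, lam k) = 1 := by
        have := hsum (fun _ => 1)
        simpa [hw1] using this
      have h3 : ∀ k < M, G k ∈ S ∧ ε/3 ≤ ‖G k - g₀‖ := by
        intro k hk
        simp only [hG, dif_pos hk]
        exact (hzF _ (e.symm ⟨k, hk⟩).2 : z _ ∈ F)
      obtain ⟨i, hi⟩ := hcon M lam G h1 h2 h3
      -- evaluate the combination at `m i`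
      have hc_eval : (∑ k ∈ Finset.range M, lam k * G k (m i)) = c (m i) := by
        have := hsum (fun u => u (m i))
        rw [this, ← hcz]
        rw [Finset.centerMass_eq_of_sum_1 _ _ hw1]
        simp [ContinuousLinearMap.sum_apply]
      rw [hc_eval] at hi
      have hco : |g₀ (m i) - (π c) i| ≤ dist (π g₀) (π c) := by
        have := dist_le_pi_dist (π g₀) (π c) i
        rwa [Real.dist_eq] at this
      rw [hπapp] at hco
      rw [abs_sub_comm] at hi
      linarith [hco.trans_lt hdist]
    obtain ⟨ℓ, u', hu1, hu2⟩ :=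
      geometric_hahn_banach_point_closed hCconv isClosed_closure hnotmem
    set x : X := -∑ i : Fin n, ℓ (Pi.single i 1) • m i with hx
    have happly : ∀ u : X →L[ℝ] ℝ, u x = -ℓ (π u) := by
      intro u
      have hdec : ℓ (π u) = ∑ i : Fin n, (u (m i)) * ℓ (Pi.single i 1) := by
        conv_lhs => rw [show π u = ∑ i : Fin n, Pi.single i (π u i) from
          (Finset.univ_sum_single (π u)).symm]
        rw [map_sum]
        refine Finset.sum_congr rfl fun i _ => ?_
        have h1 : Pi.single (M := fun _ : Fin n => ℝ) i (π u i)
            = (π u i) • Pi.single (M := fun _ : Fin n => ℝ) i (1:ℝ) := by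
          rw [← Pi.single_smul' i (π u i) (1:ℝ), smul_eq_mul, mul_one]
        rw [h1, map_smul, smul_eq_mul, hπapp]
      have h2 : u x = -∑ i : Fin n, ℓ (Pi.single i 1) * u (m i) := by
        rw [hx, map_neg, map_sum]
        congr 1
        exact Finset.sum_congr rfl fun i _ => by rw [map_smul, smul_eq_mul]
      rw [h2, hdec, neg_inj]
      exact Finset.sum_congr rfl fun i _ => mul_comm _ _
    refine ⟨x, -u', ?_, ?_⟩
    · rw [happly g₀]; linarith
    · intro u huS hux
      by_contra hbig
      have huF : u ∈ F := ⟨huS, le_of_not_gt hbig⟩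
      have h2 : u' < ℓ (π u) :=
        hu2 _ (subset_closure ⟨u, subset_convexHull ℝ F huF, rfl⟩)
      rw [happly u] at hux
      linarith

end DSz


namespace DSz

open MeasureTheory

theorem darboux {SS : Set ℝ} (hSS : MeasurableSet SS) {r : ℝ≥0∞} (hr : r ≤ mu0 SS) :
    ∃ u, u ⊆ SS ∧ MeasurableSet u ∧ mu0 u = r := by
  have hfin : ∀ E : Set ℝ, mu0 E ≠ ⊤ := fun E => (measure_lt_top mu0 E).ne
  set φ : ℝ → ℝ := fun a => (mu0 (SS ∩ Iic a)).toReal with hφ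
  have hsplit : ∀ a b : ℝ, a ≤ b →
      mu0 (SS ∩ Iic b) = mu0 (SS ∩ Iic a) + mu0 (SS ∩ Ioc a b) := by
    intro a b hab
    have hset : SS ∩ Iic b = (SS ∩ Iic a) ∪ (SS ∩ Ioc a b) := by
      rw [← Set.inter_union_distrib_left, Iic_union_Ioc_eq_Iic hab]
    rw [hset, measure_union ?_ (hSS.inter measurableSet_Ioc)]
    rw [Set.disjoint_left]
    rintro y ⟨_, hy1⟩ ⟨_, hy2, _⟩
    exact absurd hy1 (not_le.2 hy2)
  have key : ∀ a b : ℝ, a ≤ b → φ b - φ a ≤ b - a ∧ 0 ≤ φ b - φ a := by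
    intro a b hab
    have hd : φ b - φ a = (mu0 (SS ∩ Ioc a b)).toReal := by
      rw [hφ]
      simp only
      rw [hsplit a b hab, ENNReal.toReal_add (hfin _) (hfin _)]
      ring
    constructor
    · rw [hd]
      have h1 : mu0 (SS ∩ Ioc a b) ≤ ENNReal.ofReal (b - a) := by
        calc mu0 (SS ∩ Ioc a b) ≤ mu0 (Ioc a b) := measure_mono Set.inter_subset_right
          _ = volume (Ioc a b ∩ Icc 0 1) := Measure.restrict_apply measurableSet_Ioc
          _ ≤ volume (Ioc a b) := measure_mono Set.inter_subset_left
          _ = ENNReal.ofReal (b - a) := Real.volume_Ioc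
      calc (mu0 (SS ∩ Ioc a b)).toReal ≤ (ENNReal.ofReal (b - a)).toReal :=
            ENNReal.toReal_mono ENNReal.ofReal_ne_top h1
        _ = b - a := ENNReal.toReal_ofReal (by linarith)
    · rw [hd]; exact ENNReal.toReal_nonneg
  have hcont : Continuous φ := by
    refine LipschitzWith.continuous (K := 1) (LipschitzWith.of_dist_le_mul fun a b => ?_)
    rw [NNReal.coe_one, one_mul, Real.dist_eq, Real.dist_eq]
    rcases le_total a b with h | h
    · have hk := key a b h
      have h1 : |φ a - φ b| = φ b - φ a := by rw [abs_sub_comm]; exact abs_of_nonneg hk.2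
      have h2 : |a - b| = b - a := by rw [abs_sub_comm]; exact abs_of_nonneg (by linarith)
      linarith [hk.1]
    · have hk := key b a h
      have h1 : |φ a - φ b| = φ a - φ b := abs_of_nonneg hk.2
      have h2 : |a - b| = a - b := abs_of_nonneg (by linarith)
      linarith [hk.1]
  have h1 : φ (-1) = 0 := by
    have hempty : SS ∩ Iic (-1) ∩ Icc (0:ℝ) 1 = ∅ := by
      ext y
      simp only [Set.mem_inter_iff, Set.mem_Iic, Set.mem_Icc, Set.mem_empty_iff_false, iff_false,
        not_and]
      rintro ⟨_, hy1⟩ hy2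
      intro; linarith
    rw [hφ]
    simp only
    rw [Measure.restrict_apply (hSS.inter measurableSet_Iic), hempty]
    simp
  have h2 : φ 1 = (mu0 SS).toReal := by
    rw [hφ]
    simp only
    congr 1
    rw [Measure.restrict_apply (hSS.inter measurableSet_Iic), Measure.restrict_apply hSS]
    congr 1
    ext y
    simp only [Set.mem_inter_iff, Set.mem_Iic, Set.mem_Icc]
    constructor
    · rintro ⟨⟨h1, _⟩, h3⟩; exact ⟨h1, h3⟩
    · rintro ⟨h1, h3⟩; exact ⟨⟨h1, h3.2⟩, h3⟩
  have hrr : r.toReal ∈ Set.Icc (φ (-1)) (φ 1) := by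
    rw [h1, h2]
    exact ⟨ENNReal.toReal_nonneg, ENNReal.toReal_mono (hfin SS) hr⟩
  obtain ⟨a, _, ha⟩ := intermediate_value_Icc (by norm_num : (-1:ℝ) ≤ 1) hcont.continuousOn hrr
  refine ⟨SS ∩ Iic a, Set.inter_subset_left, hSS.inter measurableSet_Iic, ?_⟩
  have hfr : r ≠ ⊤ := (lt_of_le_of_lt hr (measure_lt_top mu0 SS)).ne
  exact (ENNReal.toReal_eq_toReal_iff' (hfin _) hfr).1 ha

theorem split_aux {SS : Set ℝ} (hSS : MeasurableSet SS) :
    ∀ (M : ℕ) (lam : ℕ → ℝ), (∀ k < M, 0 ≤ lam k) → (∑ k ∈ Finset.range M, lam k) ≤ 1 →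
    ∃ B : ℕ → Set ℝ, (∀ k, MeasurableSet (B k)) ∧ (∀ k l, k ≠ l → Disjoint (B k) (B l)) ∧
      (∀ k, B k ⊆ SS) ∧ (∀ k < M, mu0 (B k) = ENNReal.ofReal (lam k) * mu0 SS) ∧
      (∀ k, M ≤ k → B k = ∅) := by
  intro M
  induction M with
  | zero =>
      intro lam _ _
      exact ⟨fun _ => ∅, fun _ => MeasurableSet.empty, fun _ _ _ => by simp,
        fun _ => Set.empty_subset _, fun k hk => absurd hk (Nat.not_lt_zero k), fun _ _ => rfl⟩
  | succ N IH =>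
      intro lam h0 h1
      have hsum_le : (∑ k ∈ Finset.range N, lam k) ≤ 1 := by
        have := h0 N (Nat.lt_succ_self N)
        rw [Finset.sum_range_succ] at h1
        linarith
      obtain ⟨B0, hB0m, hB0d, hB0s, hB0μ, hB0e⟩ :=
        IH lam (fun k hk => h0 k (hk.trans (Nat.lt_succ_self N))) hsum_le
      set U := ⋃ k ∈ Finset.range N, B0 k with hU
      have hUm : MeasurableSet U := Finset.measurableSet_biUnion _ fun k _ => hB0m k
      have hUs : U ⊆ SS := Set.iUnion₂_subset fun k _ => hB0s k
      have hUμ : mu0 U = ENNReal.ofReal (∑ k ∈ Finset.range N, lam k) * mu0 SS := by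
        rw [hU, measure_biUnion_finset (fun a _ b _ hab => hB0d a b hab) (fun k _ => hB0m k)]
        rw [Finset.sum_congr rfl fun k hk => hB0μ k (Finset.mem_range.1 hk), ← Finset.sum_mul,
          ← ENNReal.ofReal_sum_of_nonneg
            (fun k hk => h0 k ((Finset.mem_range.1 hk).trans (Nat.lt_succ_self N)))]
      have hRμ : mu0 (SS \ U) = mu0 SS - mu0 U :=
        measure_diff hUs hUm.nullMeasurableSet (measure_ne_top mu0 U)
      have hle : ENNReal.ofReal (lam N) * mu0 SS ≤ mu0 (SS \ U) := by
        rw [hRμ, hUμ]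
        refine ENNReal.le_sub_of_add_le_left
          (ENNReal.mul_ne_top ENNReal.ofReal_ne_top (measure_ne_top _ _)) ?_
        rw [← add_mul, ← ENNReal.ofReal_add (Finset.sum_nonneg fun k hk => h0 k
            ((Finset.mem_range.1 hk).trans (Nat.lt_succ_self N))) (h0 N (Nat.lt_succ_self N)),
          ← Finset.sum_range_succ]
        calc ENNReal.ofReal (∑ k ∈ Finset.range (N+1), lam k) * mu0 SS ≤ 1 * mu0 SS :=
              mul_le_mul_left (ENNReal.ofReal_le_one.2 h1) _
          _ = mu0 SS := one_mul _
      obtain ⟨u, hus, hum, huμ⟩ := darboux (hSS.diff hUm) hle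
      refine ⟨fun k => if k = N then u else B0 k, ?_, ?_, ?_, ?_, ?_⟩
      · intro k; by_cases hk : k = N <;> simp [hk, hum, hB0m k]
      · intro k l hkl
        dsimp only
        have haux : ∀ j, j ≠ N → Disjoint u (B0 j) := by
          intro j hj
          rcases lt_or_ge j N with hjN | hjN
          · rw [Set.disjoint_left]
            intro y hy hyB
            exact (hus hy).2 (Set.mem_biUnion (Finset.mem_range.2 hjN) hyB)
          · rw [hB0e j hjN]; exact Set.disjoint_empty u
        by_cases hk : k = N
        · subst hk
          rw [if_pos rfl, if_neg (fun h => hkl h.symm)]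
          exact haux l (fun h => hkl h.symm)
        · by_cases hl : l = N
          · subst hl
            rw [if_neg hk, if_pos rfl]
            exact (haux k hk).symm
          · rw [if_neg hk, if_neg hl]
            exact hB0d k l hkl
      · intro k; by_cases hk : k = N
        · simpa [hk] using hus.trans Set.diff_subset
        · simpa [hk] using hB0s k
      · intro k hk
        dsimp only
        by_cases hke : k = N
        · subst hke; rw [if_pos rfl, huμ]
        · rw [if_neg hke]
          exact hB0μ k (lt_of_le_of_ne (Nat.lt_succ_iff.1 hk) hke)
      · intro k hk
        dsimp only
        have hkN : k ≠ N := by omega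
        rw [if_neg hkN]
        exact hB0e k (by omega)

end DSz


namespace DSz

open MeasureTheory

theorem split_measure {SS : Set ℝ} (hSS : MeasurableSet SS) (M : ℕ) (lam : ℕ → ℝ)
    (h0 : ∀ k < M, 0 ≤ lam k) (h1 : (∑ k ∈ Finset.range M, lam k) = 1) :
    ∃ B : ℕ → Set ℝ, (∀ k, MeasurableSet (B k)) ∧ (∀ k l, k ≠ l → Disjoint (B k) (B l)) ∧
      (∀ k, B k ⊆ SS) ∧ (⋃ k ∈ Finset.range M, B k) = SS ∧
      (∀ k < M, mu0 (B k) = ENNReal.ofReal (lam k) * mu0 SS) := by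
  classical
  cases M with
  | zero => exact absurd h1 (by norm_num)
  | succ N =>
      obtain ⟨B0, hm, hd, hs, hμ, he⟩ := split_aux hSS (N+1) lam h0 h1.le
      set U := ⋃ k ∈ Finset.range (N+1), B0 k with hU
      have hUm : MeasurableSet U := Finset.measurableSet_biUnion _ fun k _ => hm k
      have hUs : U ⊆ SS := Set.iUnion₂_subset fun k _ => hs k
      have hUμ : mu0 U = mu0 SS := by
        rw [hU, measure_biUnion_finset (fun a _ b _ hab => hd a b hab) (fun k _ => hm k)]
        rw [Finset.sum_congr rfl fun k hk => hμ k (Finset.mem_range.1 hk), ← Finset.sum_mul,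
          ← ENNReal.ofReal_sum_of_nonneg (fun k hk => h0 k (Finset.mem_range.1 hk)), h1,
          ENNReal.ofReal_one, one_mul]
      set L := SS \ U with hL
      have hLμ : mu0 L = 0 := by
        rw [hL, measure_diff hUs hUm.nullMeasurableSet (measure_ne_top mu0 U), hUμ, tsub_self]
      have hLd : ∀ j, Disjoint L (B0 j) := by
        intro j
        rcases lt_or_ge j (N+1) with hj | hj
        · rw [Set.disjoint_left]
          intro y hy hyB
          exact hy.2 (Set.mem_biUnion (Finset.mem_range.2 hj) hyB)
        · rw [he j hj]; exact Set.disjoint_empty L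
      refine ⟨fun k => if k = N then B0 N ∪ L else B0 k, ?_, ?_, ?_, ?_, ?_⟩
      · intro k; dsimp only
        by_cases hk : k = N <;> simp [hk, hm k, hL, (hm N).union (hSS.diff hUm)]
      · intro k l hkl; dsimp only
        by_cases hk : k = N
        · have hl' : l ≠ N := fun h => hkl (hk.trans h.symm)
          rw [hk, if_pos rfl, if_neg hl']
          exact Disjoint.union_left (hd N l fun h => hl' h.symm) (hLd l)
        · by_cases hl : l = N
          · rw [hl, if_neg hk, if_pos rfl]
            exact Disjoint.union_right (hd k N hk) (hLd k).symm
          · rw [if_neg hk, if_neg hl]; exact hd k l hkl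
      · intro k; dsimp only
        by_cases hk : k = N
        · simp only [hk, if_pos rfl]
          exact Set.union_subset (hs N) Set.diff_subset
        · rw [if_neg hk]; exact hs k
      · apply Set.Subset.antisymm
        · refine Set.iUnion₂_subset fun k _ => ?_
          dsimp only
          by_cases hk : k = N
          · simp only [hk, if_pos rfl]
            exact Set.union_subset (hs N) Set.diff_subset
          · rw [if_neg hk]; exact hs k
        · intro y hy
          by_cases hyU : y ∈ U
          · rw [hU] at hyU
            obtain ⟨k, hk, hyk⟩ := Set.mem_iUnion₂.1 hyU
            refine Set.mem_biUnion hk ?_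
            by_cases hkN : k = N
            · subst hkN; rw [if_pos rfl]; exact Set.mem_union_left _ hyk
            · rw [if_neg hkN]; exact hyk
          · refine Set.mem_biUnion (Finset.mem_range.2 (Nat.lt_succ_self N)) ?_
            rw [if_pos rfl]
            exact Set.mem_union_right _ ⟨hy, hyU⟩
      · intro k hk; dsimp only
        by_cases hkN : k = N
        · rw [hkN, if_pos rfl]
          have : mu0 (B0 N ∪ L) ≤ mu0 (B0 N) + mu0 L := measure_union_le _ _
          have h2 : mu0 (B0 N) ≤ mu0 (B0 N ∪ L) := measure_mono Set.subset_union_left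
          rw [hLμ, add_zero] at this
          rw [le_antisymm this h2]
          exact hμ N (Nat.lt_succ_self N)

        · rw [if_neg hkN]
          exact hμ k hk

theorem split_integrals {X : Type} [NormedAddCommGroup X] [NormedSpace ℝ X] [CompleteSpace X]
    {n : ℕ} (s : Fin n → SimpleFunc ℝ X) (hs : ∀ i, Integrable (⇑(s i)) mu0)
    {A : Set ℝ} (hA : MeasurableSet A) (M : ℕ) (lam : ℕ → ℝ)
    (h0 : ∀ k < M, 0 ≤ lam k) (h1 : (∑ k ∈ Finset.range M, lam k) = 1) :
    ∃ B : ℕ → Set ℝ, (∀ k, MeasurableSet (B k)) ∧ (∀ k l, k ≠ l → Disjoint (B k) (B l)) ∧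
      (∀ k, B k ⊆ A) ∧ (⋃ k ∈ Finset.range M, B k) = A ∧
      (∀ k < M, ∀ i, ∫ x in B k, s i x ∂mu0 = lam k • ∫ x in A, s i x ∂mu0) := by
  classical
  set σ : ℝ → (Fin n → X) := fun x i => s i x with hσ
  have hfin : (Set.range σ).Finite := by
    refine Set.Finite.subset (Set.Finite.pi fun i => (s i).finite_range) ?_
    rintro y ⟨x, rfl⟩
    exact fun i _ => ⟨x, rfl⟩
  set V := hfin.toFinset with hV
  set Cell : (Fin n → X) → Set ℝ := fun v => σ ⁻¹' {v} with hCell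
  have hCm : ∀ v, MeasurableSet (Cell v) := by
    intro v
    have hc : Cell v = ⋂ i, (⇑(s i)) ⁻¹' {v i} := by
      ext x
      simp only [hCell, Set.mem_preimage, Set.mem_singleton_iff, Set.mem_iInter, hσ, funext_iff]
    rw [hc]
    exact MeasurableSet.iInter fun i => (s i).measurableSet_fiber (v i)
  have hCd : ∀ v w, v ≠ w → Disjoint (Cell v) (Cell w) := by
    intro v w hvw
    rw [Set.disjoint_left]
    intro x hx hx'
    rw [Set.mem_preimage, Set.mem_singleton_iff] at hx hx'
    exact hvw (hx.symm.trans hx')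
  have hsplit : ∀ v : Fin n → X, ∃ W : ℕ → Set ℝ,
      (∀ k, MeasurableSet (W k)) ∧ (∀ k l, k ≠ l → Disjoint (W k) (W l)) ∧
      (∀ k, W k ⊆ Cell v ∩ A) ∧ (⋃ k ∈ Finset.range M, W k) = Cell v ∩ A ∧
      (∀ k < M, mu0 (W k) = ENNReal.ofReal (lam k) * mu0 (Cell v ∩ A)) :=
    fun v => split_measure ((hCm v).inter hA) M lam h0 h1
  choose W hWm hWd hWs hWu hWμ using hsplit
  have hconst : ∀ (v : Fin n → X) (i : Fin n) (E : Set ℝ), MeasurableSet E → E ⊆ Cell v →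
      ∫ x in E, s i x ∂mu0 = (mu0 E).toReal • v i := by
    intro v i E hEm hEc
    rw [setIntegral_congr_fun hEm (g := fun _ => v i) fun x hx => by
      have : σ x = v := hEc hx
      exact congrFun this i, setIntegral_const (v i)]
    rfl
  have hAu : ⋃ v ∈ V, (Cell v ∩ A) = A := by
    apply Set.Subset.antisymm (Set.iUnion₂_subset fun v _ => Set.inter_subset_right)
    intro x hx
    refine Set.mem_biUnion ((Set.Finite.mem_toFinset hfin).2 ⟨x, rfl⟩) ⟨rfl, hx⟩
  have hAint : ∀ i, ∫ x in A, s i x ∂mu0 = ∑ v ∈ V, (mu0 (Cell v ∩ A)).toReal • v i := by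
    intro i
    have hbi := integral_biUnion_finset (f := fun x => s i x) V (fun v _ => (hCm v).inter hA)
      (fun a _ b _ hab => (hCd a b hab).mono Set.inter_subset_left Set.inter_subset_left)
      (fun v _ => (hs i).integrableOn)
    rw [hAu] at hbi
    rw [hbi]
    exact Finset.sum_congr rfl fun v _ =>
      hconst v i (Cell v ∩ A) ((hCm v).inter hA) Set.inter_subset_left
  refine ⟨fun k => ⋃ v ∈ V, W v k, ?_, ?_, ?_, ?_, ?_⟩
  · exact fun k => Finset.measurableSet_biUnion _ fun v _ => hWm v k
  · intro k l hkl
    rw [Set.disjoint_left]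
    intro x hx hx'
    obtain ⟨v, hvV, hxv⟩ := Set.mem_iUnion₂.1 hx
    obtain ⟨w, hwV, hxw⟩ := Set.mem_iUnion₂.1 hx'
    rcases eq_or_ne v w with rfl | hvw
    · exact (Set.disjoint_left.1 (hWd v k l hkl)) hxv hxw
    · exact (Set.disjoint_left.1 (hCd v w hvw)) ((hWs v k) hxv).1 ((hWs w l) hxw).1
  · exact fun k => Set.iUnion₂_subset fun v _ => (hWs v k).trans Set.inter_subset_right
  · apply Set.Subset.antisymm
    · exact Set.iUnion₂_subset fun k _ =>
        Set.iUnion₂_subset fun v _ => (hWs v k).trans Set.inter_subset_right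
    · intro x hx
      have hmem : σ x ∈ V := (Set.Finite.mem_toFinset hfin).2 ⟨x, rfl⟩
      have hxcell : x ∈ Cell (σ x) ∩ A := ⟨rfl, hx⟩
      rw [← hWu (σ x)] at hxcell
      obtain ⟨k, hk, hxk⟩ := Set.mem_iUnion₂.1 hxcell
      exact Set.mem_biUnion hk (Set.mem_biUnion hmem hxk)
  · intro k hk i
    calc ∫ x in ⋃ v ∈ V, W v k, s i x ∂mu0
        = ∑ v ∈ V, ∫ x in W v k, s i x ∂mu0 :=
          integral_biUnion_finset V (fun v _ => hWm v k)
            (fun a _ b _ hab => (hCd a b hab).mono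
              ((hWs a k).trans Set.inter_subset_left) ((hWs b k).trans Set.inter_subset_left))
            (fun v _ => (hs i).integrableOn)
      _ = ∑ v ∈ V, (lam k * (mu0 (Cell v ∩ A)).toReal) • v i := by
          refine Finset.sum_congr rfl fun v _ => ?_
          rw [hconst v i (W v k) (hWm v k) ((hWs v k).trans Set.inter_subset_left), hWμ v k hk,
            ENNReal.toReal_mul, ENNReal.toReal_ofReal (h0 k hk)]
      _ = lam k • ∑ v ∈ V, (mu0 (Cell v ∩ A)).toReal • v i := by
          rw [Finset.smul_sum]
          exact Finset.sum_congr rfl fun v _ => mul_smul _ _ _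
      _ = lam k • ∫ x in A, s i x ∂mu0 := by rw [hAint i]

end DSz


namespace DSz

open MeasureTheory

theorem Lp_coeFn_sum {α E : Type*} [MeasurableSpace α] {μ : Measure α} [NormedAddCommGroup E]
    {q : ℝ≥0∞} {ι : Type*} (s : Finset ι) (F : ι → Lp E q μ) :
    ⇑(∑ i ∈ s, F i) =ᵐ[μ] fun x => ∑ i ∈ s, (F i : α → E) x := by
  classical
  induction s using Finset.cons_induction with
  | empty =>
      simp only [Finset.sum_empty]
      filter_upwards [Lp.coeFn_zero E q μ] with x hx
      simpa using hx
  | cons a s ha IH =>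
      rw [Finset.sum_cons]
      filter_upwards [Lp.coeFn_add (F a) (∑ i ∈ s, F i), IH] with x h1 h2
      rw [h1]
      simp only [Pi.add_apply, Finset.sum_cons, h2]

set_option maxHeartbeats 1000000 in
theorem heart (X : Type) [NormedAddCommGroup X] [NormedSpace ℝ X] [CompleteSpace X]
    (p : ℝ≥0∞) [Fact (1 ≤ p)] (hp' : p ≠ ⊤)
    {S : Set (X →L[ℝ] ℝ)} (hS : S ⊆ closedBall 0 1) {ε δ : ℝ} (hε : 0 < ε) (hδ : 0 < δ)
    {h : LpOn X p →L[ℝ] ℝ} (hh : h ∈ Mixes X p (dentDeriv ε S)) (n : ℕ)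
    (fv : Fin n → LpOn X p) :
    ∃ h', h' ∈ Mixes X p S ∧ (∀ i, |h' (fv i) - h (fv i)| < δ) ∧ ε/4 < ‖h - h'‖ := by
  classical
  obtain ⟨κ, t, A, g, hAm, hAd, hAu, hgS, hhdef⟩ := hh
  -- simple approximations of the test vectors
  have happrox : ∀ i : Fin n, ∃ s : SimpleFunc ℝ X, MemLp (⇑s) p mu0 ∧
      eLpNorm (⇑(fv i) - ⇑s) p mu0 < ENNReal.ofReal (δ/8) := by
    intro i
    have hne : (ENNReal.ofReal (δ/8)) ≠ 0 :=
      ne_of_gt (ENNReal.ofReal_pos.2 (by linarith))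
    obtain ⟨s, hs1, hs2⟩ := (Lp.memLp (fv i)).exists_simpleFunc_eLpNorm_sub_lt hp' hne
    exact ⟨s, hs2, hs1⟩
  choose sfun hsmem hsclose using happrox
  set fs : Fin n → LpOn X p := fun i => (hsmem i).toLp (sfun i) with hfs
  have hfscoe : ∀ i, ⇑(fs i) =ᵐ[mu0] ⇑(sfun i) := fun i => MemLp.coeFn_toLp (hsmem i)
  have hfsnorm : ∀ i, ‖fv i - fs i‖ ≤ δ/8 := by
    intro i
    rw [Lp.norm_def]
    apply ENNReal.toReal_le_of_le_ofReal (by linarith)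
    have hae : ⇑(fv i - fs i) =ᵐ[mu0] (⇑(fv i) - ⇑(sfun i)) := by
      filter_upwards [Lp.coeFn_sub (fv i) (fs i), hfscoe i] with x h1 h2
      rw [h1]
      simp [h2]
    rw [eLpNorm_congr_ae hae]
    exact (hsclose i).le
  have hevaldiff : ∀ (u : LpOn X p →L[ℝ] ℝ), ‖u‖ ≤ 1 → ∀ i, |u (fv i) - u (fs i)| ≤ δ/8 := by
    intro u hu i
    rw [← map_sub]
    calc |u (fv i - fs i)| ≤ ‖u‖ * ‖fv i - fs i‖ := by
          rw [← Real.norm_eq_abs]; exact u.le_opNorm _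
      _ ≤ 1 * (δ/8) :=
          mul_le_mul hu (hfsnorm i) (norm_nonneg _) zero_le_one
      _ = δ/8 := one_mul _
  set m : Fin n → κ → X := fun i j => TInt X p (A j) (fs i) with hm
  set δ' : ℝ := δ / (4 * (t.card + 1)) with hδ'
  have hδ'pos : 0 < δ' := by positivity
  -- convex combinations of far points, weak*-close to `g j`
  have hcomb : ∀ j : κ, ∃ (M : ℕ) (lam : ℕ → ℝ) (G : ℕ → (X →L[ℝ] ℝ)), j ∈ t →
      ((∀ k < M, 0 ≤ lam k) ∧ (∑ k ∈ Finset.range M, lam k) = 1 ∧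
      (∀ k < M, G k ∈ S ∧ ε/3 ≤ ‖G k - g j‖) ∧
      (∀ i, |(∑ k ∈ Finset.range M, lam k * G k (m i j)) - (g j) (m i j)| < δ')) := by
    intro j
    by_cases hj : j ∈ t
    · obtain ⟨M, lam, G, h1, h2, h3, h4⟩ :=
        exists_near_comb hε (hgS j hj) (fun i => m i j) hδ'pos
      exact ⟨M, lam, G, fun _ => ⟨h1, h2, h3, h4⟩⟩
    · exact ⟨1, fun _ => 1, fun _ => 0, fun hjt => absurd hjt hj⟩
  choose Mj lamj Gj hcombspec using hcomb
  -- exact splittings of the pieces adapted to the simple functions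
  have hsplits : ∀ j : κ, ∃ B : ℕ → Set ℝ, j ∈ t →
      ((∀ k, MeasurableSet (B k)) ∧ (∀ k l, k ≠ l → Disjoint (B k) (B l)) ∧
      (∀ k, B k ⊆ A j) ∧ (⋃ k ∈ Finset.range (Mj j), B k) = A j ∧
      (∀ k < Mj j, ∀ i, ∫ x in B k, sfun i x ∂mu0 = lamj j k • ∫ x in A j, sfun i x ∂mu0)) := by
    intro j
    by_cases hj : j ∈ t
    · obtain ⟨B, hB1, hB2, hB3, hB4, hB5⟩ := split_integrals sfun
        (fun i => (hsmem i).integrable Fact.out) (hAm j hj)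
        (Mj j) (lamj j) ((hcombspec j hj).1) ((hcombspec j hj).2.1)
      exact ⟨B, fun _ => ⟨hB1, hB2, hB3, hB4, hB5⟩⟩
    · exact ⟨fun _ => ∅, fun hjt => absurd hjt hj⟩
  choose Bj hBj using hsplits
  -- norming vectors
  have hxvex : ∀ j k, ∃ x : X,
      (j ∈ t → k < Mj j → (‖x‖ ≤ 1 ∧ ε/3 - ε/24 < ((g j) - (Gj j k)) x)) := by
    intro j k
    by_cases hjk : j ∈ t ∧ k < Mj j
    · have hnorm : ε/3 ≤ ‖g j - Gj j k‖ := by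
        rw [norm_sub_rev]; exact ((hcombspec j hjk.1).2.2.1 k hjk.2).2
      obtain ⟨x, hx1, hx2⟩ := exists_norming (g j - Gj j k) hnorm
        (by linarith : (0:ℝ) < ε/24)
      exact ⟨x, fun _ _ => ⟨hx1, hx2⟩⟩
    · exact ⟨0, fun hj hk => absurd ⟨hj, hk⟩ hjk⟩
  choose xv hxv using hxvex
  -- refined partition
  set t' : Finset ((_ : κ) × ℕ) := t.sigma (fun j => Finset.range (Mj j)) with ht'
  have hmem' : ∀ q : (_ : κ) × ℕ, q ∈ t' → q.1 ∈ t ∧ q.2 < Mj q.1 := by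
    intro q hq
    rw [ht', Finset.mem_sigma] at hq
    exact ⟨hq.1, Finset.mem_range.1 hq.2⟩
  set A' : ((_ : κ) × ℕ) → Set ℝ := fun q => Bj q.1 q.2 with hA'
  set G' : ((_ : κ) × ℕ) → (X →L[ℝ] ℝ) := fun q => Gj q.1 q.2 with hG'
  set h' : LpOn X p →L[ℝ] ℝ := ∑ q ∈ t', (G' q).comp (TInt X p (A' q)) with hh'
  have hA'm : ∀ q ∈ t', MeasurableSet (A' q) := fun q hq => (hBj q.1 (hmem' q hq).1).1 q.2
  have hA'd : ∀ q ∈ t', ∀ r ∈ t', q ≠ r → Disjoint (A' q) (A' r) := by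
    rintro ⟨j, k⟩ hq ⟨j', k'⟩ hr hne
    obtain ⟨hjt, hkM⟩ := hmem' _ hq
    obtain ⟨hjt', hkM'⟩ := hmem' _ hr
    rcases eq_or_ne j j' with rfl | hjj
    · have hkk : k ≠ k' := fun hkk => hne (by rw [hkk])
      exact (hBj j hjt).2.1 k k' hkk
    · exact Disjoint.mono ((hBj j hjt).2.2.1 k) ((hBj j' hjt').2.2.1 k')
        (hAd j hjt j' hjt' hjj)
  have hA'u : ⋃ q ∈ t', A' q = Set.univ := by
    rw [← hAu]
    apply Set.Subset.antisymm
    · exact Set.iUnion₂_subset fun q hq => ((hBj q.1 (hmem' q hq).1).2.2.1 q.2).trans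
        (Set.subset_biUnion_of_mem (hmem' q hq).1)
    · intro x hx
      obtain ⟨j, hjt, hxj⟩ := Set.mem_iUnion₂.1 hx
      rw [← (hBj j hjt).2.2.2.1] at hxj
      obtain ⟨k, hk, hxk⟩ := Set.mem_iUnion₂.1 hxj
      exact Set.mem_biUnion (show (⟨j, k⟩ : (_ : κ) × ℕ) ∈ t' from
        Finset.mem_sigma.2 ⟨hjt, hk⟩) hxk
  have hmemb : h' ∈ Mixes X p S := by
    refine ⟨_, t', A', G', hA'm, hA'd, hA'u, ?_, hh'⟩
    exact fun q hq => ((hcombspec q.1 (hmem' q hq).1).2.2.1 q.2 (hmem' q hq).2).1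
  have hhS : h ∈ Mixes X p S :=
    ⟨κ, t, A, g, hAm, hAd, hAu, fun k hk => (hgS k hk).1, hhdef⟩
  have hnh : ‖h‖ ≤ 1 := Mixes_norm_le X p hS hhS
  have hnh' : ‖h'‖ ≤ 1 := Mixes_norm_le X p hS hmemb
  -- `TInt` along refined pieces applied to the simple approximations
  have hTsplit : ∀ j, j ∈ t → ∀ i : Fin n, ∀ k, k < Mj j →
      TInt X p (Bj j k) (fs i) = lamj j k • (m i j) := by
    intro j hj i k hk
    have e1 : TInt X p (Bj j k) (fs i) = ∫ x in Bj j k, sfun i x ∂mu0 := by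
      rw [TInt_apply]
      exact integral_congr_ae (ae_restrict_of_ae (hfscoe i))
    have e2 : m i j = ∫ x in A j, sfun i x ∂mu0 := by
      rw [hm]
      dsimp only
      rw [TInt_apply]
      exact integral_congr_ae (ae_restrict_of_ae (hfscoe i))
    rw [e1, (hBj j hj).2.2.2.2 k hk i, e2]
  have hh_eval : ∀ i, h (fs i) = ∑ j ∈ t, (g j) (m i j) := by
    intro i
    rw [hhdef]
    simp only [ContinuousLinearMap.coe_sum', Finset.sum_apply,
      ContinuousLinearMap.coe_comp', Function.comp_apply]
    rfl
  have hh'_eval : ∀ i, h' (fs i) =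
      ∑ j ∈ t, ∑ k ∈ Finset.range (Mj j), lamj j k * (Gj j k) (m i j) := by
    intro i
    have e0 : h' (fs i) = ∑ q ∈ t', (G' q) (TInt X p (A' q) (fs i)) := by
      rw [hh']
      simp only [ContinuousLinearMap.coe_sum', Finset.sum_apply,
        ContinuousLinearMap.coe_comp', Function.comp_apply]
    rw [e0, ht', Finset.sum_sigma]
    refine Finset.sum_congr rfl fun j hj => ?_
    refine Finset.sum_congr rfl fun k hk => ?_
    have hTa : TInt X p (A' ⟨j, k⟩) (fs i) = lamj j k • (m i j) :=
      hTsplit j hj i k (Finset.mem_range.1 hk)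
    rw [hG']
    dsimp only
    rw [hTa, ContinuousLinearMap.map_smul, smul_eq_mul]
  have hclose_s : ∀ i, |h' (fs i) - h (fs i)| ≤ t.card * δ' := by
    intro i
    rw [hh_eval i, hh'_eval i, ← Finset.sum_sub_distrib]
    calc |∑ j ∈ t, ((∑ k ∈ Finset.range (Mj j), lamj j k * (Gj j k) (m i j)) - (g j) (m i j))|
        ≤ ∑ j ∈ t, |(∑ k ∈ Finset.range (Mj j), lamj j k * (Gj j k) (m i j)) - (g j) (m i j)| :=
          Finset.abs_sum_le_sum_abs _ _
      _ ≤ ∑ j ∈ t, δ' := Finset.sum_le_sum fun j hj => ((hcombspec j hj).2.2.2 i).le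
      _ = t.card * δ' := by rw [Finset.sum_const, nsmul_eq_mul]
  have hcard : (t.card : ℝ) * δ' ≤ δ/4 := by
    rw [hδ']
    have hd8 : (0:ℝ) ≤ δ / (4 * (t.card + 1)) := by positivity
    calc (t.card : ℝ) * (δ / (4 * (t.card + 1)))
        ≤ ((t.card : ℝ) + 1) * (δ / (4 * (t.card + 1))) :=
          mul_le_mul_of_nonneg_right (by linarith) hd8
      _ = δ/4 := by
          field_simp
  have hclose : ∀ i, |h' (fv i) - h (fv i)| < δ := by
    intro i
    have e1 := hevaldiff h hnh i
    have e2 := hevaldiff h' hnh' i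
    have e3 := hclose_s i
    have k1 : |h' (fv i) - h (fv i)| ≤ |h' (fv i) - h' (fs i)| + |h' (fs i) - h (fv i)| :=
      abs_sub_le _ _ _
    have k2 : |h' (fs i) - h (fv i)| ≤ |h' (fs i) - h (fs i)| + |h (fs i) - h (fv i)| :=
      abs_sub_le _ _ _
    have k3 : |h (fs i) - h (fv i)| = |h (fv i) - h (fs i)| := abs_sub_comm _ _
    rw [k3] at k2
    linarith
  -- the far point
  have hre : h = ∑ q ∈ t', (g q.1).comp (TInt X p (A' q)) := by
    rw [hhdef, ht', Finset.sum_sigma]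
    refine Finset.sum_congr rfl fun j hj => ?_
    apply ContinuousLinearMap.ext
    intro f
    simp only [ContinuousLinearMap.coe_sum', Finset.sum_apply,
      ContinuousLinearMap.coe_comp', Function.comp_apply]
    have hTa : TInt X p (A j) f = ∑ k ∈ Finset.range (Mj j), TInt X p (Bj j k) f := by
      have hcover := (hBj j hj).2.2.2.1
      have hbi := integral_biUnion_finset (f := fun x : ℝ => f x)
        (Finset.range (Mj j)) (fun k _ => (hBj j hj).1 k)
        (fun a _ b _ hab => (hBj j hj).2.1 a b hab)
        (fun k _ => (integrableY X p f).integrableOn)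
      rw [hcover] at hbi
      simp only [TInt_apply]
      exact hbi
    rw [hTa, map_sum]
  set dd : ((_ : κ) × ℕ) → (X →L[ℝ] ℝ) := fun q => g q.1 - G' q with hdd
  have hdiff : h - h' = ∑ q ∈ t', (dd q).comp (TInt X p (A' q)) := by
    rw [hre, hh', ← Finset.sum_sub_distrib]
    exact Finset.sum_congr rfl fun q _ => (ContinuousLinearMap.sub_comp _ _ _).symm
  have hμfin : ∀ q : ((_ : κ) × ℕ), mu0 (A' q) ≠ ⊤ := fun q => measure_ne_top mu0 _
  set f₀ : LpOn X p := ∑ q ∈ t'.attach,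
    indicatorConstLp p (hA'm q.1 q.2) (hμfin q.1) (xv q.1.1 q.1.2) with hf₀
  have hTf₀ : ∀ r, ∀ hr : r ∈ t', TInt X p (A' r) f₀ = (mu0 (A' r)).toReal • xv r.1 r.2 := by
    intro r hr
    rw [hf₀, map_sum]
    rw [Finset.sum_eq_single_of_mem (⟨r, hr⟩ : {x // x ∈ t'}) (Finset.mem_attach _ _)]
    · rw [TInt_apply, setIntegral_indicatorConstLp (hA'm r hr), Set.inter_self]; rfl
    · intro q _ hqr
      rw [TInt_apply, setIntegral_indicatorConstLp (hA'm r hr)]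
      have hdisj : Disjoint (A' q.1) (A' r) :=
        hA'd q.1 q.2 r hr (fun hq1r => hqr (Subtype.ext hq1r))
      rw [Set.disjoint_iff_inter_eq_empty.1 hdisj]
      simp
  have hval : 7*ε/24 ≤ (h - h') f₀ := by
    have e0 : (h - h') f₀ = ∑ r ∈ t', (mu0 (A' r)).toReal * ((dd r) (xv r.1 r.2)) := by
      rw [hdiff]
      simp only [ContinuousLinearMap.coe_sum', Finset.sum_apply,
        ContinuousLinearMap.coe_comp', Function.comp_apply]
      refine Finset.sum_congr rfl fun r hr => ?_
      rw [hTf₀ r hr, ContinuousLinearMap.map_smul, smul_eq_mul]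
    rw [e0]
    have hsum : ∑ r ∈ t', (mu0 (A' r)).toReal = 1 := by
      rw [← ENNReal.toReal_sum (fun r _ => hμfin r)]
      have hpd : Set.PairwiseDisjoint (↑t' : Set ((_ : κ) × ℕ)) A' :=
        fun a ha b hb hab => hA'd a ha b hb hab
      have hμU : mu0 (⋃ q ∈ t', A' q) = ∑ q ∈ t', mu0 (A' q) :=
        measure_biUnion_finset hpd (fun q hq => hA'm q hq)
      rw [← hμU, hA'u, mu0_univ, ENNReal.toReal_one]
    calc 7*ε/24 = (7*ε/24) * ∑ r ∈ t', (mu0 (A' r)).toReal := by rw [hsum, mul_one]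
      _ = ∑ r ∈ t', (7*ε/24) * (mu0 (A' r)).toReal := Finset.mul_sum _ _ _
      _ ≤ ∑ r ∈ t', (mu0 (A' r)).toReal * ((dd r) (xv r.1 r.2)) := by
          refine Finset.sum_le_sum fun r hr => ?_
          rw [mul_comm]
          refine mul_le_mul_of_nonneg_left ?_ ENNReal.toReal_nonneg
          have hx := (hxv r.1 r.2 (hmem' r hr).1 (hmem' r hr).2).2
          have he : ε/3 - ε/24 = 7*ε/24 := by ring
          rw [he] at hx
          exact hx.le
  have hf₀coe : ⇑f₀ =ᵐ[mu0]
      fun x => ∑ q ∈ t'.attach, Set.indicator (A' q.1) (fun _ => xv q.1.1 q.1.2) x := by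
    have hall : ∀ᵐ x ∂mu0, ∀ q : {y // y ∈ t'},
        (indicatorConstLp p (hA'm q.1 q.2) (hμfin q.1) (xv q.1.1 q.1.2) : ℝ → X) x =
          Set.indicator (A' q.1) (fun _ => xv q.1.1 q.1.2) x :=
      ae_all_iff.2 fun q => indicatorConstLp_coeFn
    filter_upwards [Lp_coeFn_sum t'.attach
      (fun q => indicatorConstLp p (hA'm q.1 q.2) (hμfin q.1) (xv q.1.1 q.1.2)), hall]
      with x h1 h2
    rw [hf₀, h1]
    exact Finset.sum_congr rfl fun q _ => h2 q
  have hf₀bdd : ∀ x : ℝ,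
      ‖∑ q ∈ t'.attach, Set.indicator (A' q.1) (fun _ => xv q.1.1 q.1.2) x‖ ≤ 1 := by
    intro x
    by_cases hex : ∃ q ∈ t'.attach, x ∈ A' q.1
    · obtain ⟨q₀, hq₀, hxq₀⟩ := hex
      rw [Finset.sum_eq_single_of_mem q₀ hq₀ ?_]
      · rw [Set.indicator_of_mem hxq₀]
        exact (hxv q₀.1.1 q₀.1.2 (hmem' q₀.1 q₀.2).1 (hmem' q₀.1 q₀.2).2).1
      · intro q _ hqne
        refine Set.indicator_of_notMem (fun hxq => ?_) _
        exact (Set.disjoint_left.1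
          (hA'd q.1 q.2 q₀.1 q₀.2 (fun h => hqne (Subtype.ext h)))) hxq hxq₀
    · push_neg at hex
      rw [Finset.sum_eq_zero fun q hq => Set.indicator_of_notMem (hex q hq) _]
      simp
  have hf₀norm : ‖f₀‖ ≤ 1 := by
    rw [Lp.norm_def]
    apply ENNReal.toReal_le_of_le_ofReal zero_le_one
    rw [eLpNorm_congr_ae hf₀coe]
    calc eLpNorm (fun x => ∑ q ∈ t'.attach,
          Set.indicator (A' q.1) (fun _ => xv q.1.1 q.1.2) x) p mu0
        ≤ mu0 Set.univ ^ p.toReal⁻¹ * ENNReal.ofReal 1 :=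
          eLpNorm_le_of_ae_bound (Filter.Eventually.of_forall hf₀bdd)
      _ = ENNReal.ofReal 1 := by rw [mu0_univ, ENNReal.one_rpow, one_mul]
  refine ⟨h', hmemb, hclose, ?_⟩
  have habs : (h - h') f₀ ≤ ‖h - h'‖ := by
    calc (h - h') f₀ ≤ |(h - h') f₀| := le_abs_self _
      _ ≤ ‖h - h'‖ * ‖f₀‖ := by
          rw [← Real.norm_eq_abs]; exact (h - h').le_opNorm _
      _ ≤ ‖h - h'‖ * 1 := mul_le_mul_of_nonneg_left hf₀norm (norm_nonneg _)
      _ = ‖h - h'‖ := mul_one _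
  linarith
end DSz


namespace DSz

open MeasureTheory

theorem main_induction (X : Type) [NormedAddCommGroup X] [NormedSpace ℝ X] [CompleteSpace X]
    (p : ℝ≥0∞) [Fact (1 ≤ p)] (hp' : p ≠ ⊤) {ε : ℝ} (hε : 0 < ε) (o : Ordinal.{0}) :
    Mixes X p (derivIter (dentDeriv ε) (closedBall (0 : X →L[ℝ] ℝ) 1) o) ⊆
      derivIter (szlenkDeriv (ε/4)) (closedBall (0 : LpOn X p →L[ℝ] ℝ) 1) o := by
  induction o using Ordinal.limitRecOn with
  | zero =>
      rw [derivIter_zero, derivIter_zero]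
      intro h hh
      exact mem_closedBall_zero_iff.2 (Mixes_norm_le X p (fun u hu => hu) hh)
  | add_one o IH =>
      rw [Ordinal.add_one_eq_succ, derivIter_succ, derivIter_succ]
      intro h hh
      have hsub : derivIter (dentDeriv ε) (closedBall (0 : X →L[ℝ] ℝ) 1) o ⊆
          closedBall 0 1 := derivIter_subset (fun S => dentDeriv_subset ε S) _ o
      have hmemW : h ∈ derivIter (szlenkDeriv (ε/4)) (closedBall (0 : LpOn X p →L[ℝ] ℝ) 1) o :=
        IH (Mixes_mono X p (dentDeriv_subset ε _) hh)
      refine ⟨hmemW, ?_⟩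
      rintro ⟨U, hUopen, hhU, hdiam⟩
      obtain ⟨nn, fvec, δ, hδ, hball⟩ := hUopen h hhU
      obtain ⟨h', hmemb, hclose, hfar⟩ := heart X p hp' hsub hε hδ hh nn fvec
      have h'U : h' ∈ U := hball h' (fun i => hclose i)
      have h'W : h' ∈ derivIter (szlenkDeriv (ε/4)) (closedBall (0 : LpOn X p →L[ℝ] ℝ) 1) o :=
        IH hmemb
      have hed : edist h h' ≤ EMetric.diam
          ((derivIter (szlenkDeriv (ε/4)) (closedBall (0 : LpOn X p →L[ℝ] ℝ) 1) o) ∩ U) :=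
        EMetric.edist_le_diam_of_mem ⟨hmemW, hhU⟩ ⟨h'W, h'U⟩
      have hlt := lt_of_le_of_lt hed hdiam
      rw [edist_dist] at hlt
      have hd4 : dist h h' < ε/4 :=
        (ENNReal.ofReal_lt_ofReal_iff (by linarith)).1 hlt
      rw [dist_eq_norm] at hd4
      linarith
  | limit o ho IH =>
      rw [derivIter_limit _ _ _ ho, derivIter_limit _ _ _ ho]
      intro h hh
      refine Set.mem_iInter.2 fun β => ?_
      exact IH β.1 β.2 (Mixes_mono X p (Set.iInter_subset _ β) hh)

theorem DzEps_le_SzEps (X : Type) [NormedAddCommGroup X] [NormedSpace ℝ X] [CompleteSpace X]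
    (p : ℝ≥0∞) [Fact (1 ≤ p)] (hp' : p ≠ ⊤) {ε : ℝ} (hε : 0 < ε) :
    DzEps X ε ≤ SzEps (LpOn X p) (ε/4) := by
  apply derivIndex_le
  intro o hsz
  rw [Set.eq_empty_iff_forall_notMem]
  intro gg hgg
  have h1 := mixes_single X p (S := derivIter (dentDeriv ε) (closedBall 0 1) o) hgg
  have h2 := main_induction X p hp' hε o h1
  rw [hsz] at h2
  exact h2

end DSz


/-- If `X` has separable dual and `1 < p < ∞` then `Dz(X) ≤ Sz(L_p(X))`. -/
theorem dentability_le_szlenk_Lp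
    (X : Type) [NormedAddCommGroup X] [NormedSpace ℝ X] [CompleteSpace X]
    (hsep : TopologicalSpace.SeparableSpace (X →L[ℝ] ℝ))
    (p : ℝ≥0∞) (hp : 1 < p) (hp' : p ≠ ⊤) [Fact (1 ≤ p)] :
    Dz X ≤ Sz (LpOn X p) := by
  haveI : Nonempty {ε : ℝ // 0 < ε} := ⟨⟨1, one_pos⟩⟩
  unfold Dz
  refine ciSup_le fun εs => le_trans (DSz.DzEps_le_SzEps X p hp' εs.2) ?_
  unfold Sz
  have hb : BddAbove (Set.range (fun εs : {ε : ℝ // 0 < ε} => SzEps (LpOn X p) εs.1)) :=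
    ⟨⊤, fun y _ => le_top⟩
  exact le_ciSup hb ⟨εs.1/4, div_pos εs.2 (by norm_num)⟩

end
end

section
/- Let X and Y be Banach spaces, let A be a tree on S_X and B be a tree on S_Y, and let Ψ be an order isomorphism from A to B with the property that whenever x ∈ A and (x_k) ⊂ S_X is a normalized weakly null sequence with (x, x_k) ∈ A for all k, then there is a normalized weakly null sequence (y_k) ⊂ S_Y such that Ψ(x, x_k) = (Ψ(x), y_k) for all k. Then for every ordinal α one has Ψ(A^(α)) ⊆ B^(α). -/
open Metric Set Filter TopologicalSpace
open scoped ENNReal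

noncomputable section

lemma derivIter_zero' {α : Type*} (D : Set α → Set α) (K : Set α) :
    derivIter D K 0 = K :=
  Ordinal.limitRecOn_zero ..

lemma derivIter_succ' {α : Type*} (D : Set α → Set α) (K : Set α) (o : Ordinal.{0}) :
    derivIter D K (Order.succ o) = D (derivIter D K o) :=
  Ordinal.limitRecOn_succ ..

lemma derivIter_limit' {α : Type*} (D : Set α → Set α) (K : Set α) {o : Ordinal.{0}}
    (h : Order.IsSuccLimit o) :
    derivIter D K o = ⋂ (β : {β : Ordinal.{0} // β < o}), derivIter D K β.1 :=
  Ordinal.limitRecOn_limit _ _ _ _ h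

/-- Each weak-derivative iterate of a prefix-closed tree is contained in the tree and is
itself prefix-closed. -/
lemma derivIter_weakDeriv_closed {X : Type*} [NormedAddCommGroup X] [NormedSpace ℝ X]
    (A : Set (List X)) (hA : ∀ l ∈ A, ∀ l' : List X, l' <+: l → l' ∈ A) :
    ∀ α : Ordinal.{0}, derivIter weakDeriv A α ⊆ A ∧
      ∀ l ∈ derivIter weakDeriv A α, ∀ l' : List X, l' <+: l →
        l' ∈ derivIter weakDeriv A α := by
  intro α
  induction α using Ordinal.limitRecOn with
  | zero =>
    rw [derivIter_zero']
    exact ⟨subset_rfl, hA⟩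
  | add_one o ih =>
    rw [Ordinal.add_one_eq_succ, derivIter_succ']
    constructor
    · rintro l ⟨m, hm, hlm, _⟩
      exact ih.1 (ih.2 m hm l hlm)
    · rintro l ⟨m, hm, hlm, hy⟩ l' hl'
      exact ⟨m, hm, hl'.trans hlm, hy⟩
  | limit o ho ih =>
    rw [derivIter_limit' _ _ ho]
    constructor
    · intro l hl
      have h0 : (0 : Ordinal.{0}) < o := ho.pos
      have := Set.mem_iInter.1 hl ⟨0, h0⟩
      exact (ih 0 h0).1 this
    · intro l hl l' hl'
      refine Set.mem_iInter.2 fun β => ?_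
      exact (ih β.1 β.2).2 l (Set.mem_iInter.1 hl β) l' hl'

/-- An order isomorphism between trees on unit spheres which maps weakly null extensions to
weakly null extensions satisfies `Ψ(A^(α)) ⊆ B^(α)` for every ordinal `α`. -/
theorem image_derivIter_subset
    (X Y : Type) [NormedAddCommGroup X] [NormedSpace ℝ X] [CompleteSpace X]
    [NormedAddCommGroup Y] [NormedSpace ℝ Y] [CompleteSpace Y]
    (A : Set (List X)) (B : Set (List Y))
    (hA : IsTreeOnSphere A) (hB : IsTreeOnSphere B)
    (Ψ : List X → List Y) (hΨ : IsTreeOrderIso A B Ψ)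
    (hExt : MapsWeaklyNullExtensions A Ψ) :
    ∀ α : Ordinal.{0}, Ψ '' derivIter weakDeriv A α ⊆ derivIter weakDeriv B α := by
  have hAclosed := derivIter_weakDeriv_closed A hA.2.2
  intro α
  induction α using Ordinal.limitRecOn with
  | zero =>
    rw [derivIter_zero', derivIter_zero']
    rintro _ ⟨l, hl, rfl⟩
    exact hΨ.1 l hl
  | add_one o ih =>
    rw [Ordinal.add_one_eq_succ, derivIter_succ', derivIter_succ']
    rintro _ ⟨l, ⟨m, hm, hlm, y, hy, hext⟩, rfl⟩
    -- l, m ∈ A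
    have hmA : m ∈ A := (hAclosed o).1 hm
    have hlα : l ∈ derivIter weakDeriv A o := (hAclosed o).2 m hm l hlm
    have hlA : l ∈ A := (hAclosed o).1 hlα
    -- use hExt on m with sequence y
    obtain ⟨z, hz, hzΨ⟩ := hExt m hmA y hy (fun k => (hAclosed o).1 (hext k))
    refine ⟨Ψ m, ih ⟨m, hm, rfl⟩, ?_, z, hz, fun n => ?_⟩
    · rcases eq_or_ne l m with rfl | hne
      · exact List.prefix_rfl
      · exact ((hΨ.2.2 l hlA m hmA).2 ⟨hlm, hne⟩).1
    · rw [← hzΨ n]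
      exact ih ⟨m ++ [y n], hext n, rfl⟩
  | limit o ho ih =>
    rw [derivIter_limit' _ _ ho, derivIter_limit' _ _ ho]
    rintro _ ⟨l, hl, rfl⟩
    refine Set.mem_iInter.2 fun β => ?_
    exact ih β.1 β.2 ⟨l, Set.mem_iInter.1 hl β, rfl⟩

end
end
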